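/- arXiv:0712.4115 — 5 statements merged into one kernel-verified Lean document; each statement's English description precedes it below -/
import Mathlib

section
/- Let H be an n×N matrix over F₂ such that every row of H has even Hamming weight and any two distinct rows of H have exactly one common position at which both rows are nonzero. Let M = [H | 1 | I] be the n×(N+1+n) matrix obtained from H by appending the all-ones column vector and the n×n identity matrix. Then M is self-orthogonal, i.e., M·Mᵀ = 0 over F₂. -/
open Matrix

lemma zmod2_mul_eq_ite (a b : ZMod 2) : a * b = if a ≠ 0 ∧ b ≠ 0 then 1 else 0 := by
  revert a b; decide

/-- If every row of the binary matrix `H` has even Hamming weight and any two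
distinct rows overlap in exactly one position, then the matrix `M = [H | 1 | I]` obtained by
appending the all-ones column and the `n × n` identity matrix is self-orthogonal:
`M * Mᵀ = 0` over `F₂`. -/
theorem stmt_1 (n N : ℕ) (H : Matrix (Fin n) (Fin N) (ZMod 2))
    (heven : ∀ i : Fin n, Even (Finset.univ.filter (fun j : Fin N => H i j ≠ 0)).card)
    (hoverlap : ∀ i i' : Fin n, i ≠ i' →
      (Finset.univ.filter (fun j : Fin N => H i j ≠ 0 ∧ H i' j ≠ 0)).card = 1)
    (M : Matrix (Fin n) ((Fin N ⊕ Unit) ⊕ Fin n) (ZMod 2))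
    (hM : ∀ i : Fin n, M i =
      Sum.elim (Sum.elim (H i) (fun _ => 1)) (fun k : Fin n => if i = k then 1 else 0)) :
    M * Mᵀ = 0 := by
  ext i i'
  simp only [Matrix.mul_apply, Matrix.transpose_apply, Matrix.zero_apply]
  rw [hM i, hM i']
  rw [Fintype.sum_sum_type, Fintype.sum_sum_type]
  simp only [Sum.elim_inl, Sum.elim_inr]
  have h1 : (∑ j : Fin N, H i j * H i' j)
      = ((Finset.univ.filter (fun j : Fin N => H i j ≠ 0 ∧ H i' j ≠ 0)).card : ZMod 2) := by
    rw [← Finset.sum_boole]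
    exact Finset.sum_congr rfl fun j _ => zmod2_mul_eq_ite _ _
  rw [h1]
  have h2 : (∑ k : Fin n, (if i = k then (1:ZMod 2) else 0) * (if i' = k then 1 else 0))
      = if i = i' then 1 else 0 := by
    rcases eq_or_ne i i' with h | h
    · subst h
      simp [ite_mul, Finset.sum_ite_eq]
    · simp only [if_neg h]
      apply Finset.sum_eq_zero
      intro k _
      rcases eq_or_ne i k with rfl | hk
      · simp [fun hh => h (hh : i' = i).symm, (Ne.symm h)]
      · simp [hk]
  rw [h2]
  rcases eq_or_ne i i' with h | h
  · subst h
    have : ((Finset.univ.filter (fun j : Fin N => H i j ≠ 0 ∧ H i j ≠ 0)).card : ZMod 2) = 0 := by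
      rw [ZMod.natCast_eq_zero_iff]
      have h3 := (heven i).two_dvd
      convert h3 using 2
      · rfl
      simp
    simp only [and_self] at this ⊢
    simp only [this]
    decide
  · rw [hoverlap i i' h]
    simp [h]
    decide
end

section
/- Let H be an m×n matrix over F₂ such that every column of H has exactly ρ nonzero entries (with ρ ≥ 1) and any two distinct columns of H have at most one common row position at which both columns are nonzero. Then every nonzero vector x ∈ F₂ⁿ with H·x = 0 has Hamming weight at least ρ + 1; i.e., the linear code defined as the null space of H has minimum distance at least ρ + 1. -/
open Matrix

/-- If every column of the binary matrix `H` has exactly `ρ ≥ 1` nonzero entries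
and any two distinct columns overlap in at most one row position, then every nonzero vector `x`
in the null space of `H` has Hamming weight at least `ρ + 1`; i.e., the binary linear code with
parity check matrix `H` has minimum distance at least `ρ + 1`. -/
theorem stmt_3 (m n ρ : ℕ) (hρ : 1 ≤ ρ) (H : Matrix (Fin m) (Fin n) (ZMod 2))
    (hcol : ∀ j : Fin n, (Finset.univ.filter (fun i : Fin m => H i j ≠ 0)).card = ρ)
    (hpair : ∀ j j' : Fin n, j ≠ j' →
      (Finset.univ.filter (fun i : Fin m => H i j ≠ 0 ∧ H i j' ≠ 0)).card ≤ 1)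
    (x : Fin n → ZMod 2) (hx : x ≠ 0) (hker : H.mulVec x = 0) :
    ρ + 1 ≤ (Finset.univ.filter (fun j : Fin n => x j ≠ 0)).card := by
  classical
  obtain ⟨j₀, hj₀⟩ : ∃ j, x j ≠ 0 := by
    by_contra h; push_neg at h; exact hx (funext fun j => h j)
  set S := Finset.univ.filter (fun j : Fin n => x j ≠ 0) with hS
  have hj₀S : j₀ ∈ S := by simp [hS, hj₀]
  set R := Finset.univ.filter (fun i : Fin m => H i j₀ ≠ 0) with hR
  have key : ∀ i ∈ R, ∃ j ∈ S.erase j₀, H i j ≠ 0 := by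
    intro i hi
    by_contra hcon
    push_neg at hcon
    have hsum : ∑ j, H i j * x j = 0 := congrFun hker i
    have hz : ∀ j ∈ Finset.univ.erase j₀, H i j * x j = 0 := by
      intro j hj
      have hjne : j ≠ j₀ := (Finset.mem_erase.mp hj).1
      by_cases hxj : x j = 0
      · simp [hxj]
      · have hjS : j ∈ S.erase j₀ := by
          simp [hS, Finset.mem_erase, hjne, hxj]
        simp [hcon j hjS]
    have : ∑ j, H i j * x j = H i j₀ * x j₀ := by
      rw [← Finset.add_sum_erase _ _ (Finset.mem_univ j₀),
        Finset.sum_eq_zero hz, add_zero]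
    rw [this] at hsum
    have hHi : H i j₀ ≠ 0 := by simpa [hR] using hi
    exact (mul_ne_zero hHi hj₀) hsum
  choose f hf1 hf2 using key
  have hinj : ∀ i₁ ∈ R.attach, ∀ i₂ ∈ R.attach,
      f i₁.1 i₁.2 = f i₂.1 i₂.2 → i₁ = i₂ := by
    intro i₁ _ i₂ _ heq
    by_contra hne
    have hne' : i₁.1 ≠ i₂.1 := fun h => hne (Subtype.ext h)
    set j := f i₁.1 i₁.2 with hj
    have hjne : j ≠ j₀ := (Finset.mem_erase.mp (hf1 i₁.1 i₁.2)).1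
    have hR1 : H i₁.1 j₀ ≠ 0 := (Finset.mem_filter.mp i₁.2).2
    have hR2 : H i₂.1 j₀ ≠ 0 := (Finset.mem_filter.mp i₂.2).2
    have h1 : i₁.1 ∈ Finset.univ.filter (fun i : Fin m => H i j₀ ≠ 0 ∧ H i j ≠ 0) :=
      Finset.mem_filter.mpr ⟨Finset.mem_univ _, hR1, hf2 i₁.1 i₁.2⟩
    have h2 : i₂.1 ∈ Finset.univ.filter (fun i : Fin m => H i j₀ ≠ 0 ∧ H i j ≠ 0) :=
      Finset.mem_filter.mpr ⟨Finset.mem_univ _, hR2, heq ▸ hf2 i₂.1 i₂.2⟩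
    have h2le : 2 ≤ (Finset.univ.filter (fun i : Fin m => H i j₀ ≠ 0 ∧ H i j ≠ 0)).card :=
      Finset.one_lt_card.mpr ⟨i₁.1, h1, i₂.1, h2, hne'⟩
    exact absurd (hpair j₀ j (Ne.symm hjne)) (by omega)
  have hcard : R.card ≤ (S.erase j₀).card := by
    have := Finset.card_le_card_of_injOn (fun i : {i // i ∈ R} => f i.1 i.2)
      (fun i _ => hf1 i.1 i.2) (fun a ha b hb h => hinj a ha b hb h)
    simpa using this
  have hRρ : R.card = ρ := hcol j₀
  have : (S.erase j₀).card = S.card - 1 := Finset.card_erase_of_mem hj₀S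
  have hS1 : 1 ≤ S.card := Finset.card_pos.mpr ⟨j₀, hj₀S⟩
  omega
end

section
/- Let q be a prime power and m ≥ 2 an integer, and regard the field F_{q^m} as an m-dimensional vector space over F_q. Let L be a line of EG(m,q) not passing through 0. If u ∈ F_{q^m}^* satisfies uL = L, then u = 1. Consequently, for a primitive element α of F_{q^m}, the lines L, αL, α²L, …, α^{q^m−2}L are pairwise distinct. -/
/-- A line of the Euclidean geometry over the field `F`: a coset `a + W` of a 1-dimensional
`F`-subspace `W`, i.e., a set of the form `{a + γ • b : γ ∈ F}` with `b ≠ 0`. -/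
def IsLine (F : Type*) [Field F] {V : Type*} [AddCommGroup V] [Module F V]
    (L : Set V) : Prop :=
  ∃ a b : V, b ≠ 0 ∧ L = Set.range fun γ : F => a + γ • b

/-- Regard the field `K = F_{q^m}` as an `m`-dimensional vector space over
`F = F_q` (with `q` a prime power and `m ≥ 2`). Let `L` be a line of `EG(m,q)` not passing
through `0`. If `u ∈ K*` satisfies `uL = L` then `u = 1`. Consequently, for a primitive element
`α` of `K` (a generator of the cyclic group `K*`), the lines
`L, αL, α²L, …, α^(q^m - 2)L` are pairwise distinct. -/
theorem stmt_13 (q m : ℕ) (hm : 2 ≤ m) (F K : Type*) [Field F] [Fintype F] [Field K]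
    [Fintype K] [Algebra F K] (hq : Fintype.card F = q) (hrank : Module.finrank F K = m)
    (L : Set K) (hL : IsLine F L) (h0 : (0 : K) ∉ L) :
    (∀ u : K, u ≠ 0 → (fun x => u * x) '' L = L → u = 1) ∧
      (∀ α : K, α ≠ 0 → (∀ x : K, x ≠ 0 → ∃ k : ℕ, α ^ k = x) →
        ∀ i j : ℕ, i < q ^ m - 1 → j < q ^ m - 1 → i ≠ j →
          (fun x => α ^ i * x) '' L ≠ (fun x => α ^ j * x) '' L) := by
  classical
  obtain ⟨a, b, hb, hLab⟩ := hL
  have hAinj : Function.Injective (algebraMap F K) := (algebraMap F K).injective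
  have key : ∀ u : K, u ≠ 0 → (fun x => u * x) '' L = L → u = 1 := by
    intro u hu huL
    have haL : a ∈ L := by rw [hLab]; exact ⟨0, by simp⟩
    have habL : a + b ∈ L := by rw [hLab]; exact ⟨1, by simp⟩
    have h1 : u * a ∈ L := huL ▸ ⟨a, haL, rfl⟩
    have h2 : u * (a + b) ∈ L := huL ▸ ⟨a + b, habL, rfl⟩
    rw [hLab] at h1 h2
    obtain ⟨γ₁, hγ₁⟩ := h1
    obtain ⟨γ₂, hγ₂⟩ := h2
    simp only [Algebra.smul_def] at hγ₁ hγ₂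
    have hub : u * b = (algebraMap F K γ₂ - algebraMap F K γ₁) * b := by
      linear_combination hγ₁ - hγ₂
    have hu' : u = algebraMap F K γ₂ - algebraMap F K γ₁ := mul_right_cancel₀ hb hub
    by_cases hc1 : γ₂ - γ₁ = 1
    · have h1' : algebraMap F K γ₂ - algebraMap F K γ₁ = 1 := by
        rw [← map_sub, hc1, map_one]
      rw [hu', h1']
    · exfalso
      have hne : algebraMap F K γ₂ - algebraMap F K γ₁ - 1 ≠ 0 := by
        intro h
        exact hc1 (hAinj (by rw [map_sub, map_one]; linear_combination h))
      apply h0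
      rw [hLab]
      refine ⟨-(γ₁ / (γ₂ - γ₁ - 1)), ?_⟩
      show a + (-(γ₁ / (γ₂ - γ₁ - 1))) • b = 0
      rw [Algebra.smul_def, map_neg, map_div₀, map_sub, map_sub, map_one]
      rw [hu'] at hγ₁
      field_simp
      linear_combination -hγ₁
  refine ⟨key, ?_⟩
  have hq1 : 1 ≤ q := by rw [← hq]; exact Fintype.card_pos
  have hqm1 : 1 ≤ q ^ m := Nat.one_le_pow _ _ hq1
  have hcardK : Fintype.card K = q ^ m := by
    rw [Module.card_eq_pow_finrank (K := F) (V := K), hq, hrank]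
  intro α hα hgen i j hi hj hij
  have main : ∀ i j : ℕ, i < j → j < q ^ m - 1 →
      (fun x => α ^ i * x) '' L = (fun x => α ^ j * x) '' L → False := by
    intro i j hlt hj hEq
    set d := j - i with hd
    have hdpos : 0 < d := by omega
    have hinj : Function.Injective (fun x : K => α ^ i * x) := fun x y h =>
      mul_left_cancel₀ (pow_ne_zero _ hα) h
    have hfun : (fun x : K => α ^ j * x) =
        (fun x : K => α ^ i * x) ∘ fun x : K => α ^ d * x := by
      funext x
      show α ^ j * x = α ^ i * (α ^ d * x)
      rw [← mul_assoc, ← pow_add]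
      have : i + d = j := by omega
      rw [this]
    rw [hfun, Set.image_comp] at hEq
    have hdL : (fun x => α ^ d * x) '' L = L :=
      ((Set.image_eq_image hinj).mp hEq).symm
    have hαd : α ^ d = 1 := key _ (pow_ne_zero _ hα) hdL
    have hsub : (Finset.univ : Finset K) ⊆
        insert 0 ((Finset.range d).image (α ^ ·)) := by
      intro x _
      by_cases hx : x = 0
      · simp [hx]
      · obtain ⟨k, hk⟩ := hgen x hx
        refine Finset.mem_insert_of_mem (Finset.mem_image.2
          ⟨k % d, Finset.mem_range.2 (Nat.mod_lt _ hdpos), ?_⟩)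
        rw [← hk]
        conv_rhs => rw [← Nat.div_add_mod k d]
        rw [pow_add, pow_mul, hαd, one_pow, one_mul]
    have hcard := Finset.card_le_card hsub
    rw [Finset.card_univ, hcardK] at hcard
    have hle : (insert (0 : K) ((Finset.range d).image (α ^ ·))).card ≤ d + 1 :=
      le_trans (Finset.card_insert_le _ _)
        (Nat.add_le_add_right (le_trans Finset.card_image_le (by simp)) 1)
    have hd1 : d + 1 ≤ q ^ m - 1 := Nat.succ_le_of_lt (lt_of_le_of_lt (Nat.sub_le j i) hj)
    have h2 : q ^ m ≤ q ^ m - 1 := (hcard.trans hle).trans hd1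
    have h3 : q ^ m - 1 < q ^ m := Nat.sub_lt (lt_of_lt_of_le one_pos hqm1) one_pos
    exact absurd h2 (not_le_of_gt h3)
  rcases Nat.lt_or_ge i j with h | h
  · exact fun hE => main i j h hj hE
  · exact fun hE => main j i (by omega) hi hE.symm
end

section
/- Let q be a prime power and m ≥ 2 an integer, and regard the field F_{q^m} as an m-dimensional vector space over F_q. The multiplicative group F_{q^m}^* acts on the set of lines of EG(m,q) not passing through 0 by L ↦ uL, every orbit of this action has size q^m − 1, and the number of orbits (cyclic classes) equals (q^{m-1} − 1)/(q − 1). -/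
section Aux
variable {F K : Type*} [Field F] [Field K] [Algebra F K]

lemma image_mul_image (u v : K) (L : Set K) :
    (fun x => v * x) '' ((fun x => u * x) '' L) = (fun x => (v * u) * x) '' L := by
  rw [Set.image_image]
  exact Set.image_congr fun x _ => (mul_assoc v u x).symm

lemma image_line {L : Set K} (hL : IsLine F L) {u : K} (hu : u ≠ 0) :
    IsLine F ((fun x => u * x) '' L) := by
  obtain ⟨a, b, hb, rfl⟩ := hL
  refine ⟨u * a, u * b, mul_ne_zero hu hb, ?_⟩
  rw [← Set.range_comp]
  apply congrArg
  funext γ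
  simp [Function.comp, mul_add, Algebra.mul_smul_comm]

lemma image_notMem {L : Set K} (h0 : (0 : K) ∉ L) {u : K} (hu : u ≠ 0) :
    (0 : K) ∉ (fun x => u * x) '' L := by
  rintro ⟨x, hx, hux⟩
  rcases mul_eq_zero.mp hux with h | h
  · exact hu h
  · exact h0 (h ▸ hx)

lemma stab {L : Set K} (hL : IsLine F L) (h0 : (0 : K) ∉ L) {u : K}
    (h : (fun x => u * x) '' L = L) : u = 1 := by
  obtain ⟨a, b, hb, rfl⟩ := hL
  have hmem : ∀ x ∈ Set.range fun γ : F => a + γ • b,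
      u * x ∈ Set.range fun γ : F => a + γ • b := by
    intro x hx
    rw [← h]; exact ⟨x, hx, rfl⟩
  obtain ⟨γ₀, hγ₀⟩ := hmem a ⟨0, by simp⟩
  obtain ⟨γ₁, hγ₁⟩ := hmem (a + b) ⟨1, by simp⟩
  have hub : u * b = (γ₁ - γ₀) • b := by
    have : u * b = (u * (a + b)) - u * a := by ring
    rw [this, ← hγ₀, ← hγ₁, add_sub_add_left_eq_sub, sub_smul]
  have hu : u = algebraMap F K (γ₁ - γ₀) := by
    rw [Algebra.smul_def] at hub
    exact mul_right_cancel₀ hb hub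
  set μ := γ₁ - γ₀ with hμdef
  by_cases hμ : μ = 1
  · rw [hu, hμ, map_one]
  · exfalso
    have haa : (μ - 1) • a = γ₀ • b := by
      have h2 : algebraMap F K μ * a = a + γ₀ • b := by rw [← hu, ← hγ₀]
      rw [sub_smul, one_smul, Algebra.smul_def, h2, add_sub_cancel_left]
    have ha' : a = ((μ - 1)⁻¹ * γ₀) • b := by
      have : a = (μ - 1)⁻¹ • ((μ - 1) • a) := by
        rw [smul_smul, inv_mul_cancel₀ (sub_ne_zero.mpr hμ), one_smul]
      rw [this, haa, smul_smul]
    exact h0 ⟨-((μ - 1)⁻¹ * γ₀), by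
      show a + (-((μ - 1)⁻¹ * γ₀)) • b = 0
      rw [neg_smul, ← ha', add_neg_cancel]⟩

lemma smul_inj {L : Set K} (hL : IsLine F L) (h0 : (0 : K) ∉ L) {u v : K}
    (hu : u ≠ 0) (hv : v ≠ 0)
    (h : (fun x => u * x) '' L = (fun x => v * x) '' L) : u = v := by
  have h1 : (fun x => (v⁻¹ * u) * x) '' L = L := by
    rw [← image_mul_image, h, image_mul_image, inv_mul_cancel₀ hv]
    simp
  have := stab hL h0 h1
  field_simp at this
  exact this

lemma card_line {L : Set K} (hL : IsLine F L) :
    Nat.card {x : K // x ∈ L} = Nat.card F := by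
  obtain ⟨a, b, hb, rfl⟩ := hL
  have hinj : Function.Injective (fun γ : F => a + γ • b) := by
    intro γ δ h
    simp only [add_right_inj, Algebra.smul_def] at h
    exact (algebraMap F K).injective (mul_right_cancel₀ hb h)
  exact (Nat.card_congr (Equiv.ofInjective _ hinj)).symm

variable (F K)

/-- The orbit of a set under multiplication by nonzero scalars. -/
def orbOf (L : Set K) : Set (Set K) :=
  {L' : Set K | ∃ u : K, u ≠ 0 ∧ L' = (fun x => u * x) '' L}

variable {K}

lemma orbOf_image {L : Set K} {u : K} (hu : u ≠ 0) :
    orbOf K ((fun x => u * x) '' L) = orbOf K L := by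
  ext L'
  constructor
  · rintro ⟨v, hv, rfl⟩
    exact ⟨v * u, mul_ne_zero hv hu, image_mul_image u v L⟩
  · rintro ⟨v, hv, rfl⟩
    refine ⟨v * u⁻¹, mul_ne_zero hv (inv_ne_zero hu), ?_⟩
    rw [image_mul_image, mul_assoc, inv_mul_cancel₀ hu, mul_one]

lemma self_mem_orbOf (L : Set K) : L ∈ orbOf K L :=
  ⟨1, one_ne_zero, by simp⟩

variable (K)

/-- Type of orbits of lines not through zero. -/
def OrbT := {O : Set (Set K) // ∃ L : Set K, IsLine F L ∧ (0 : K) ∉ L ∧ O = orbOf K L}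

/-- Type of lines through 1 not through 0. -/
def LineT := {p : Set K // IsLine F p ∧ (0 : K) ∉ p ∧ (1 : K) ∈ p}

/-- Type of directions not in the base field. -/
def DirT := {c : K // c ∉ Set.range (algebraMap F K)}

def piMap : LineT F K → OrbT F K :=
  fun t => ⟨orbOf K t.1, t.1, t.2.1, t.2.2.1, rfl⟩

instance [Finite K] : Finite (LineT F K) :=
  inferInstanceAs (Finite {p : Set K // IsLine F p ∧ (0 : K) ∉ p ∧ (1 : K) ∈ p})

instance [Finite K] : Finite (DirT F K) :=
  inferInstanceAs (Finite {c : K // c ∉ Set.range (algebraMap F K)})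

instance [Finite K] : Finite (OrbT F K) :=
  inferInstanceAs (Finite {O : Set (Set K) // ∃ L : Set K, IsLine F L ∧ (0 : K) ∉ L ∧
    O = orbOf K L})

variable {F K}

lemma mkline {c : K} (hc : c ∉ Set.range (algebraMap F K)) :
    IsLine F (Set.range fun γ : F => 1 + γ • c) ∧
      (0 : K) ∉ (Set.range fun γ : F => 1 + γ • c) ∧
      (1 : K) ∈ (Set.range fun γ : F => 1 + γ • c) := by
  have hc0 : c ≠ 0 := fun h => hc ⟨0, by rw [map_zero, h]⟩
  refine ⟨⟨1, c, hc0, rfl⟩, ?_, ⟨0, by show (1 : K) + (0 : F) • c = 1; simp⟩⟩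
  rintro ⟨γ, hγ⟩
  have hγ' : (1 : K) + γ • c = 0 := hγ
  have hγ0 : γ ≠ 0 := by
    rintro rfl
    rw [zero_smul, add_zero] at hγ'
    exact one_ne_zero hγ'
  have hne : algebraMap F K γ ≠ 0 := fun h => hγ0 ((algebraMap F K).injective (by rw [h, map_zero]))
  have h1 : algebraMap F K γ * c = -1 := by
    rw [← Algebra.smul_def]
    linear_combination hγ'
  refine hc ⟨-γ⁻¹, mul_left_cancel₀ hne ?_⟩
  rw [map_neg, map_inv₀, mul_neg, mul_inv_cancel₀ hne, h1]

def phiMap (F K : Type*) [Field F] [Field K] [Algebra F K] : DirT F K → LineT F K :=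
  fun c => ⟨Set.range fun γ : F => 1 + γ • c.1, mkline c.2⟩

lemma pi_fiber (o : OrbT F K) :
    Nat.card {t : LineT F K // piMap F K t = o} = Nat.card F := by
  obtain ⟨O, L, hL, h0, rfl⟩ := o
  have key : ∀ x : K, x ∈ L → x ≠ 0 := fun x hx hx0 => h0 (hx0 ▸ hx)
  have e : {x : K // x ∈ L} ≃
      {t : LineT F K // piMap F K t = ⟨orbOf K L, L, hL, h0, rfl⟩} := by
    refine Equiv.ofBijective (fun x => ⟨⟨(fun y => (x.1)⁻¹ * y) '' L,
      image_line hL (inv_ne_zero (key x.1 x.2)), image_notMem h0 (inv_ne_zero (key x.1 x.2)),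
      ⟨x.1, x.2, inv_mul_cancel₀ (key x.1 x.2)⟩⟩,
      Subtype.ext (orbOf_image (inv_ne_zero (key x.1 x.2)))⟩) ⟨?_, ?_⟩
    · intro x y h
      have h' : (fun a => (x.1)⁻¹ * a) '' L = (fun a => (y.1)⁻¹ * a) '' L :=
        congrArg (fun z => z.1.1) h
      exact Subtype.ext (inv_injective
        (smul_inj hL h0 (inv_ne_zero (key x.1 x.2)) (inv_ne_zero (key y.1 y.2)) h'))
    · rintro ⟨⟨t, htl, ht0, ht1⟩, hpi⟩
      have horb : t ∈ orbOf K L := by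
        have : orbOf K t = orbOf K L := congrArg Subtype.val hpi
        rw [← this]
        exact self_mem_orbOf t
      obtain ⟨u, hu, htu⟩ := horb
      have h1t : (1 : K) ∈ (fun x => u * x) '' L := htu ▸ ht1
      obtain ⟨y, hy, hy1⟩ := h1t
      have hyu : y = u⁻¹ := by
        field_simp
        linear_combination hy1
      refine ⟨⟨u⁻¹, hyu ▸ hy⟩, ?_⟩
      apply Subtype.ext
      apply Subtype.ext
      show ((u⁻¹)⁻¹ * ·) '' L = t
      rw [inv_inv, htu]
  rw [← Nat.card_congr e, card_line hL]

lemma phi_fiber (t : LineT F K) :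
    Nat.card {c : DirT F K // phiMap F K c = t} = Nat.card F - 1 := by
  obtain ⟨L, hL, h0, h1⟩ := t
  obtain ⟨a, b, hb, rfl⟩ := hL
  obtain ⟨γ₀, hγ₀⟩ := h1
  have hγ₀' : a + γ₀ • b = 1 := hγ₀
  have hbF : b ∉ Set.range (algebraMap F K) := by
    rintro ⟨lam, hlam⟩
    have hlam0 : lam ≠ 0 := by rintro rfl; rw [map_zero] at hlam; exact hb hlam.symm
    refine h0 ⟨γ₀ - lam⁻¹, ?_⟩
    show a + (γ₀ - lam⁻¹) • b = 0
    rw [sub_smul, ← add_sub_assoc, hγ₀', ← hlam, Algebra.smul_def, ← map_mul,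
      inv_mul_cancel₀ hlam0, map_one, sub_self]
  have hset : ∀ c : K, c ∉ Set.range (algebraMap F K) →
      ((Set.range fun γ : F => 1 + γ • c) = (Set.range fun γ : F => a + γ • b) ↔
        ∃ γ : F, γ ≠ 0 ∧ γ • b = c) := by
    intro c hcF
    constructor
    · intro h
      have : (1 : K) + (1 : F) • c ∈ Set.range fun γ : F => a + γ • b := by
        rw [← h]; exact ⟨1, rfl⟩
      obtain ⟨γ, hγ⟩ := this
      have hγ' : a + γ • b = 1 + (1 : F) • c := hγ
      rw [one_smul] at hγ'
      have hcb : (γ - γ₀) • b = c := by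
        rw [sub_smul]
        have := hγ₀'
        linear_combination hγ' - this
      refine ⟨γ - γ₀, ?_, hcb⟩
      rintro h'
      rw [h', zero_smul] at hcb
      exact hcF ⟨0, by rw [map_zero, hcb]⟩
    · rintro ⟨γ, hγ0, rfl⟩
      ext x
      constructor
      · rintro ⟨δ, rfl⟩
        refine ⟨γ₀ + δ * γ, ?_⟩
        show a + (γ₀ + δ * γ) • b = 1 + δ • γ • b
        rw [add_smul, ← add_assoc, hγ₀', mul_smul]
      · rintro ⟨δ, rfl⟩
        refine ⟨(δ - γ₀) * γ⁻¹, ?_⟩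
        show (1 : K) + ((δ - γ₀) * γ⁻¹) • γ • b = a + δ • b
        rw [smul_smul, mul_assoc, inv_mul_cancel₀ hγ0, mul_one, sub_smul, ← hγ₀']
        ring
  have e : {γ : F // γ ≠ 0} ≃
      {c : DirT F K // phiMap F K c = ⟨Set.range fun γ : F => a + γ • b,
        ⟨a, b, hb, rfl⟩, h0, ⟨γ₀, hγ₀⟩⟩} := by
    refine Equiv.ofBijective (fun γ => ⟨⟨γ.1 • b, ?_⟩, ?_⟩) ⟨?_, ?_⟩
    · rintro ⟨μ, hμ⟩
      refine hbF ⟨γ.1⁻¹ * μ, ?_⟩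
      rw [map_mul, hμ, Algebra.smul_def, ← mul_assoc, ← map_mul,
        inv_mul_cancel₀ γ.2, map_one, one_mul]
    · exact Subtype.ext ((hset (γ.1 • b) (by
        rintro ⟨μ, hμ⟩
        refine hbF ⟨γ.1⁻¹ * μ, ?_⟩
        rw [map_mul, hμ, Algebra.smul_def, ← mul_assoc, ← map_mul,
          inv_mul_cancel₀ γ.2, map_one, one_mul])).mpr ⟨γ.1, γ.2, rfl⟩)
    · intro γ δ h
      have h' : γ.1 • b = δ.1 • b := congrArg (fun z => z.1.1) h
      rw [Algebra.smul_def, Algebra.smul_def] at h'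
      exact Subtype.ext ((algebraMap F K).injective (mul_right_cancel₀ hb h'))
    · rintro ⟨⟨c, hcF⟩, hphi⟩
      have hcb := (hset c hcF).mp (congrArg Subtype.val hphi)
      obtain ⟨γ, hγ0, hγc⟩ := hcb
      exact ⟨⟨γ, hγ0⟩, Subtype.ext (Subtype.ext hγc)⟩
  rw [← Nat.card_congr e, ← Nat.card_congr (unitsEquivNeZero (G₀ := F)), Nat.card_units]

lemma card_of_fibers {A B : Type*} [Finite A] [Finite B] (f : A → B) (k : ℕ)
    (h : ∀ b : B, Nat.card {a : A // f a = b} = k) : Nat.card A = Nat.card B * k := by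
  classical
  cases nonempty_fintype A
  cases nonempty_fintype B
  rw [← Nat.card_congr (Equiv.sigmaFiberEquiv f), Nat.card_eq_fintype_card,
    Fintype.card_sigma, Nat.card_eq_fintype_card (α := B)]
  calc ∑ b : B, Fintype.card {a : A // f a = b}
      = ∑ _b : B, k := Finset.sum_congr rfl fun b _ => by
        rw [← Nat.card_eq_fintype_card, h]
    _ = Fintype.card B * k := by rw [Finset.sum_const, smul_eq_mul, Finset.card_univ]

lemma card_dirT [Finite K] :
    Nat.card (DirT F K) + Nat.card F = Nat.card K := by
  classical
  have h1 : Nat.card {c : K // c ∈ Set.range (algebraMap F K)} = Nat.card F :=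
    (Nat.card_congr (Equiv.ofInjective _ ((algebraMap F K).injective))).symm
  calc Nat.card (DirT F K) + Nat.card F
      = Nat.card {c : K // c ∈ Set.range (algebraMap F K)} +
        Nat.card {c : K // c ∉ Set.range (algebraMap F K)} := by rw [h1, add_comm]; rfl
    _ = Nat.card ({c : K // c ∈ Set.range (algebraMap F K)} ⊕
        {c : K // c ∉ Set.range (algebraMap F K)}) := (Nat.card_sum).symm
    _ = Nat.card K := Nat.card_congr (Equiv.sumCompl _)

end Aux

/-- Regard the field `K = F_{q^m}` as an `m`-dimensional vector space over
`F = F_q` (with `q` a prime power and `m ≥ 2`). The multiplicative group `K*` acts on the set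
of lines of `EG(m,q)` not passing through `0` by `L ↦ uL`; every orbit of this action has size
`q^m - 1`; and the number of orbits (cyclic classes) equals `(q^(m-1) - 1) / (q - 1)`. -/
theorem stmt_14 (q m : ℕ) (hm : 2 ≤ m) (F K : Type*) [Field F] [Fintype F] [Field K]
    [Fintype K] [Algebra F K] (hq : Fintype.card F = q) (hrank : Module.finrank F K = m) :
    (∀ L : Set K, IsLine F L → (0 : K) ∉ L → ∀ u : K, u ≠ 0 →
        IsLine F ((fun x => u * x) '' L) ∧ (0 : K) ∉ (fun x => u * x) '' L) ∧
      (∀ L : Set K, IsLine F L → (0 : K) ∉ L →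
        Nat.card {L' : Set K // ∃ u : K, u ≠ 0 ∧ L' = (fun x => u * x) '' L} = q ^ m - 1) ∧
      Nat.card {O : Set (Set K) // ∃ L : Set K, IsLine F L ∧ (0 : K) ∉ L ∧
          O = {L' : Set K | ∃ u : K, u ≠ 0 ∧ L' = (fun x => u * x) '' L}} =
        (q ^ (m - 1) - 1) / (q - 1) := by
  classical
  have hq2 : 2 ≤ q := hq ▸ Fintype.one_lt_card
  have hcardK : Fintype.card K = q ^ m := by
    rw [← hq, ← hrank]; exact Module.card_eq_pow_finrank (K := F) (V := K)
  refine ⟨fun L hL h0 u hu => ⟨image_line hL hu, image_notMem h0 hu⟩, ?_, ?_⟩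
  · intro L hL h0
    have e : {u : K // u ≠ 0} ≃ {L' : Set K // ∃ u : K, u ≠ 0 ∧ L' = (fun x => u * x) '' L} := by
      refine Equiv.ofBijective (fun u => ⟨(fun x => u.1 * x) '' L, u.1, u.2, rfl⟩) ⟨?_, ?_⟩
      · rintro ⟨u, hu⟩ ⟨v, hv⟩ h
        simp only [Subtype.mk.injEq] at h ⊢
        exact smul_inj hL h0 hu hv h
      · rintro ⟨L', u, hu, rfl⟩
        exact ⟨⟨u, hu⟩, rfl⟩
    rw [← Nat.card_congr e, ← Nat.card_congr (unitsEquivNeZero (G₀ := K)), Nat.card_units,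
      Nat.card_eq_fintype_card, hcardK]
  · have hP : Nat.card (LineT F K) = Nat.card (OrbT F K) * q :=
      card_of_fibers (piMap F K) q fun o => by
        rw [pi_fiber, Nat.card_eq_fintype_card, hq]
    have hT : Nat.card (DirT F K) = Nat.card (LineT F K) * (q - 1) :=
      card_of_fibers (phiMap F K) (q - 1) fun t => by
        rw [phi_fiber, Nat.card_eq_fintype_card, hq]
    have hD : Nat.card (DirT F K) = q ^ m - q := by
      have := card_dirT (F := F) (K := K)
      rw [Nat.card_eq_fintype_card (α := F), Nat.card_eq_fintype_card (α := K), hq, hcardK] at this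
      omega
    have e1 : q ^ m - q = q * (q ^ (m - 1) - 1) := by
      have h : q ^ m = q * q ^ (m - 1) := by
        conv_lhs => rw [show m = (m - 1) + 1 by omega]
        rw [pow_succ']
      rw [h, Nat.mul_sub, mul_one]
    have key : q * (Nat.card (OrbT F K) * (q - 1)) = q * (q ^ (m - 1) - 1) := by
      rw [← e1, ← hD, hT, hP]; ring
    have h2 : Nat.card (OrbT F K) * (q - 1) = q ^ (m - 1) - 1 :=
      Nat.eq_of_mul_eq_mul_left (by omega) key
    show Nat.card (OrbT F K) = (q ^ (m - 1) - 1) / (q - 1)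
    exact (Nat.div_eq_of_eq_mul_left (by omega) h2.symm).symm
end

section
/- Let q be a prime power and m ≥ 2 an integer. Consider the binary incidence matrix H over F₂ whose rows are indexed by the nonzero points of EG(m,q) and whose columns are indexed by the lines of EG(m,q) not passing through the origin, with (p,L)-entry equal to 1 if p ∈ L and 0 otherwise. Then every nonzero vector x over F₂, indexed by the lines not through the origin, satisfying H·x = 0 (i.e., for every nonzero point p, the sum over all lines L containing p of x_L vanishes mod 2) has Hamming weight at least q + 1; that is, the LDPC code defined as the null space of H has minimum distance at least q + 1. -/
/-- A line can be parametrized from any of its points. -/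
lemma line_through {F : Type*} [Field F] {V : Type*} [AddCommGroup V] [Module F V]
    {L : Set V} (hL : IsLine F L) {p : V} (hp : p ∈ L) :
    ∃ d : V, d ≠ 0 ∧ L = Set.range fun γ : F => p + γ • d := by
  obtain ⟨a, b, hb, rfl⟩ := hL
  obtain ⟨γ₀, rfl⟩ := hp
  refine ⟨b, hb, ?_⟩
  ext v
  constructor
  · rintro ⟨γ, rfl⟩
    exact ⟨γ - γ₀, by module⟩
  · rintro ⟨γ, rfl⟩
    exact ⟨γ₀ + γ, by module⟩

lemma range_smul_dir {F : Type*} [Field F] {V : Type*} [AddCommGroup V] [Module F V]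
    (p d : V) {δ : F} (hδ : δ ≠ 0) :
    Set.range (fun γ : F => p + γ • d) = Set.range (fun γ : F => p + γ • (δ • d)) := by
  ext v
  constructor
  · rintro ⟨γ, rfl⟩
    exact ⟨γ / δ, by show p + (γ / δ) • δ • d = p + γ • d; rw [smul_smul, div_mul_cancel₀ _ hδ]⟩
  · rintro ⟨γ, rfl⟩
    exact ⟨γ * δ, by show p + (γ * δ) • d = p + γ • δ • d; rw [smul_smul]⟩

/-- Two lines sharing two distinct points are equal. -/
lemma line_eq_of_two_points {F : Type*} [Field F] {V : Type*} [AddCommGroup V] [Module F V]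
    {L₁ L₂ : Set V} (h₁ : IsLine F L₁) (h₂ : IsLine F L₂) {p p' : V} (hne : p ≠ p')
    (hp1 : p ∈ L₁) (hp2 : p ∈ L₂) (hp1' : p' ∈ L₁) (hp2' : p' ∈ L₂) : L₁ = L₂ := by
  obtain ⟨d₁, hd₁, rfl⟩ := line_through h₁ hp1
  obtain ⟨d₂, hd₂, rfl⟩ := line_through h₂ hp2
  obtain ⟨γ₁, hγ₁⟩ := hp1'
  obtain ⟨γ₂, hγ₂⟩ := hp2'
  have hγ₁0 : γ₁ ≠ 0 := by
    rintro rfl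
    have : p = p' := by simpa using hγ₁
    exact hne this
  have hγ₂0 : γ₂ ≠ 0 := by
    rintro rfl
    have : p = p' := by simpa using hγ₂
    exact hne this
  have hdd : γ₁ • d₁ = γ₂ • d₂ := by
    have := hγ₁.trans hγ₂.symm
    exact add_left_cancel this
  rw [range_smul_dir p d₁ hγ₁0, hdd, ← range_smul_dir p d₂ hγ₂0]

open scoped Classical in
/-- For a prime power `q` (the cardinality of a finite field `F`) and `m ≥ 2`,
consider the binary incidence matrix `H` whose rows are indexed by the nonzero points of
`EG(m,q)` and whose columns are indexed by the lines of `EG(m,q)` not through the origin, with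
`(p, L)`-entry `1` iff `p ∈ L`. Every nonzero binary vector `x` indexed by the lines not
through the origin with `H · x = 0` (for every nonzero point `p`, the sum of `x L` over the
lines `L` containing `p` vanishes mod 2) has Hamming weight at least `q + 1`; i.e., the LDPC
code with parity check matrix `H` has minimum distance at least `q + 1`. -/
theorem stmt_17 (q m : ℕ) (hm : 2 ≤ m) (F : Type*) [Field F] [Fintype F]
    (hq : Fintype.card F = q)
    (x : {L : Set (Fin m → F) // IsLine F L ∧ (0 : Fin m → F) ∉ L} → ZMod 2)
    (hx : x ≠ 0)
    (hchk : ∀ p : Fin m → F, p ≠ 0 →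
      ∑ L : {L : Set (Fin m → F) // IsLine F L ∧ (0 : Fin m → F) ∉ L},
        (if p ∈ (L : Set (Fin m → F)) then x L else 0) = 0) :
    q + 1 ≤
      Nat.card {L : {L : Set (Fin m → F) // IsLine F L ∧ (0 : Fin m → F) ∉ L} // x L ≠ 0} := by
  obtain ⟨L₀, hL₀⟩ : ∃ L, x L ≠ 0 := by
    by_contra h
    push_neg at h
    exact hx (funext fun L => h L)
  obtain ⟨a, b, hb, hLeq⟩ := L₀.2.1
  set P : F → (Fin m → F) := fun γ => a + γ • b with hP
  have hPmem : ∀ γ, P γ ∈ (L₀ : Set (Fin m → F)) := fun γ => by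
    rw [hLeq]; exact ⟨γ, rfl⟩
  have hPne : ∀ γ, P γ ≠ 0 := fun γ h => L₀.2.2 (by have := hPmem γ; rwa [h] at this)
  have hPinj : Function.Injective P := by
    intro γ γ' h
    have h2 : (γ - γ') • b = 0 := by
      have : γ • b = γ' • b := by
        simpa [P] using h
      rw [sub_smul, this, sub_self]
    rcases smul_eq_zero.mp h2 with h3 | h3
    · exact sub_eq_zero.mp h3
    · exact absurd h3 hb
  have key : ∀ γ : F, ∃ L, x L ≠ 0 ∧ L ≠ L₀ ∧ P γ ∈ (L : Set (Fin m → F)) := by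
    intro γ
    by_contra h
    push_neg at h
    have hsum := hchk (P γ) (hPne γ)
    rw [Finset.sum_eq_single L₀] at hsum
    · rw [if_pos (hPmem γ)] at hsum
      exact hL₀ hsum
    · intro L _ hLne
      by_cases hmem : P γ ∈ (L : Set (Fin m → F))
      · rw [if_pos hmem]
        by_contra hxL
        exact h L hxL hLne hmem
      · exact if_neg hmem
    · intro h'
      exact absurd (Finset.mem_univ L₀) h'
  choose g hg1 hg2 hg3 using key
  have hginj : Function.Injective g := by
    intro γ γ' hgg
    by_contra hne
    have hPP : P γ ≠ P γ' := fun hp => hne (hPinj hp)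
    have heq : ((g γ : {L : Set (Fin m → F) // IsLine F L ∧ (0 : Fin m → F) ∉ L}) : Set (Fin m → F)) = (L₀ : Set (Fin m → F)) :=
      line_eq_of_two_points (g γ).2.1 L₀.2.1 hPP (hg3 γ) (hPmem γ)
        (hgg ▸ hg3 γ') (hPmem γ')
    exact hg2 γ (Subtype.ext heq)
  let f : Option F → {L : {L : Set (Fin m → F) // IsLine F L ∧ (0 : Fin m → F) ∉ L} // x L ≠ 0} :=
    fun o => o.elim ⟨L₀, hL₀⟩ fun γ => ⟨g γ, hg1 γ⟩
  have hfinj : Function.Injective f := by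
    rintro (_ | γ) (_ | γ') hff
    · rfl
    · exact absurd (congrArg Subtype.val hff).symm (hg2 γ')
    · exact absurd (congrArg Subtype.val hff) (hg2 γ)
    · exact congrArg some (hginj (by simpa [f, Subtype.ext_iff] using hff))
  calc q + 1 = Nat.card (Option F) := by
        simp [Nat.card_eq_fintype_card, hq]
    _ ≤ _ := Nat.card_le_card_of_injective f hfinj
end
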